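/- For all R ≥ 1, τ ≥ 1, and k ≥ 0, the integral I(R,τ) = ∫₀^R ∫₀^R (1+r²+t²)^{−1} · r(r²+t²) / (r²+t² + (r²+t²)r² + 4(τ²+k²)r²) dt dr satisfies I(R,τ) ≤ C·R/τ for an absolute constant C. -/
import Mathlib

open MeasureTheory Real Set intervalIntegral

lemma half_int (R : ℝ) (hR : 0 ≤ R) :
    ∫ t in Set.Ioc (0:ℝ) R, t ^ (-(1/2) : ℝ) = 2 * Real.sqrt R := by
  rw [← integral_of_le hR,
    integral_rpow (Or.inl (by norm_num)),
    Real.zero_rpow (by norm_num), Real.sqrt_eq_rpow]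
  norm_num
  ring

lemma key_ineq (τ k r t : ℝ) (hτ : 1 ≤ τ) (hr : 0 < r) (ht : 0 < t) :
    (1 + r ^ 2 + t ^ 2)⁻¹ *
      (r * (r ^ 2 + t ^ 2) /
        (r ^ 2 + t ^ 2 + (r ^ 2 + t ^ 2) * r ^ 2 + 4 * (τ ^ 2 + k ^ 2) * r ^ 2)) ≤
    (4 * τ * Real.sqrt r)⁻¹ * t ^ (-(1/2) : ℝ) := by
  have ha : Real.sqrt r ^ 2 = r := Real.sq_sqrt hr.le
  have hb : Real.sqrt t ^ 2 = t := Real.sq_sqrt ht.le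
  have hab : (Real.sqrt r * Real.sqrt t) ^ 2 = r * t := by rw [mul_pow, ha, hb]
  have har : 0 < Real.sqrt r := Real.sqrt_pos.2 hr
  have hbt : 0 < Real.sqrt t := Real.sqrt_pos.2 ht
  have hτ0 : 0 < τ := by linarith
  have hs : (0:ℝ) < r ^ 2 + t ^ 2 := by positivity
  have hD : (0:ℝ) < r ^ 2 + t ^ 2 + (r ^ 2 + t ^ 2) * r ^ 2 + 4 * (τ ^ 2 + k ^ 2) * r ^ 2 := by
    have h1 : (0:ℝ) < 4 * (τ ^ 2 + k ^ 2) * r ^ 2 := by positivity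
    nlinarith [sq_nonneg r, sq_nonneg t, mul_nonneg (sq_nonneg r) (sq_nonneg t), sq_nonneg (r*r)]
  rw [Real.rpow_neg ht.le, ← Real.sqrt_eq_rpow, ← mul_inv]
  rw [inv_mul_eq_div, div_div, inv_eq_one_div]
  rw [div_le_div_iff₀ (by positivity) (by positivity)]
  nlinarith [mul_nonneg (sq_nonneg (2*τ*r - Real.sqrt r * Real.sqrt t)) hs.le,
    mul_nonneg (sq_nonneg (r - t)) hs.le,
    (by rw [hab] : (Real.sqrt r * Real.sqrt t) ^ 2 * (r^2+t^2) = r * t * (r^2+t^2)),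
    hab, sq_nonneg (r*t), sq_nonneg (k*r), sq_nonneg (k*r*r), sq_nonneg (k*r*t),
    sq_nonneg (r*r), sq_nonneg (t*t), sq_nonneg (r*r*t), sq_nonneg (r*t*t),
    sq_nonneg (r*r*r), sq_nonneg (τ*r), mul_nonneg (sq_nonneg (τ*r)) hs.le,
    mul_nonneg (sq_nonneg (k*r)) hs.le]

/-- For all `R ≥ 1`, `τ ≥ 1`, `k ≥ 0`, the double integral
`I(R,τ) = ∫₀^R ∫₀^R (1+r²+t²)⁻¹ · r(r²+t²)/(r²+t² + (r²+t²)r² + 4(τ²+k²)r²) dt dr`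
satisfies `I(R,τ) ≤ C·R/τ` for an absolute constant `C`. -/
theorem stmt7 :
    ∃ C > (0:ℝ), ∀ R τ k : ℝ, 1 ≤ R → 1 ≤ τ → 0 ≤ k →
      (∫ r in (0:ℝ)..R, ∫ t in (0:ℝ)..R,
          (1 + r ^ 2 + t ^ 2)⁻¹ *
            (r * (r ^ 2 + t ^ 2) /
              (r ^ 2 + t ^ 2 + (r ^ 2 + t ^ 2) * r ^ 2 + 4 * (τ ^ 2 + k ^ 2) * r ^ 2))) ≤
        C * R / τ := by
  refine ⟨1, one_pos, fun R τ k hR hτ hk => ?_⟩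
  have hR0 : (0:ℝ) ≤ R := by linarith
  have hτ0 : (0:ℝ) < τ := by linarith
  set f : ℝ → ℝ → ℝ := fun r t =>
    (1 + r ^ 2 + t ^ 2)⁻¹ *
      (r * (r ^ 2 + t ^ 2) /
        (r ^ 2 + t ^ 2 + (r ^ 2 + t ^ 2) * r ^ 2 + 4 * (τ ^ 2 + k ^ 2) * r ^ 2)) with hf
  have hfnn : ∀ r : ℝ, 0 ≤ r → ∀ t : ℝ, 0 ≤ f r t := by
    intro r hr t
    exact mul_nonneg (by positivity)
      (div_nonneg (mul_nonneg hr (by positivity)) (by positivity))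
  -- inner bound
  have inner_bound : ∀ r : ℝ, 0 < r →
      (∫ t in (0:ℝ)..R, f r t) ≤ (Real.sqrt R / (2*τ)) * r ^ (-(1/2) : ℝ) := by
    intro r hr
    have hDpos : ∀ t : ℝ,
        0 < r ^ 2 + t ^ 2 + (r ^ 2 + t ^ 2) * r ^ 2 + 4 * (τ ^ 2 + k ^ 2) * r ^ 2 := by
      intro t
      nlinarith [sq_nonneg t, sq_nonneg k, sq_nonneg (r*t),
        mul_nonneg (sq_nonneg k) (sq_nonneg r), sq_nonneg (r*r), sq_nonneg (τ*r)]
    have hcont : Continuous fun t : ℝ => f r t := by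
      apply Continuous.mul
      · exact Continuous.inv₀ (by fun_prop) (fun t => by positivity)
      · exact Continuous.div (by fun_prop) (by fun_prop) (fun t => (hDpos t).ne')
    have hint1 : IntegrableOn (fun t => f r t) (Set.Ioc 0 R) :=
      hcont.integrableOn_Ioc
    have hint2 : IntegrableOn (fun t : ℝ => (4*τ*Real.sqrt r)⁻¹ * t ^ (-(1/2) : ℝ))
        (Set.Ioc 0 R) := by
      have := (intervalIntegral.intervalIntegrable_rpow' (a := 0) (b := R)
        (r := -(1/2)) (by norm_num)).const_mul ((4*τ*Real.sqrt r)⁻¹)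
      exact (intervalIntegrable_iff_integrableOn_Ioc_of_le hR0).mp this
    rw [integral_of_le hR0]
    calc ∫ t in Set.Ioc (0:ℝ) R, f r t
        ≤ ∫ t in Set.Ioc (0:ℝ) R, (4*τ*Real.sqrt r)⁻¹ * t ^ (-(1/2) : ℝ) := by
          apply setIntegral_mono_on hint1 hint2 measurableSet_Ioc
          intro t ht
          exact key_ineq τ k r t hτ hr ht.1
      _ = (4*τ*Real.sqrt r)⁻¹ * (2 * Real.sqrt R) := by
          rw [MeasureTheory.integral_const_mul, half_int R hR0]
      _ = (Real.sqrt R / (2*τ)) * r ^ (-(1/2) : ℝ) := by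
          rw [Real.rpow_neg hr.le, ← Real.sqrt_eq_rpow]
          have h1 : Real.sqrt r ≠ 0 := ne_of_gt (Real.sqrt_pos.2 hr)
          field_simp
          ring
  -- outer
  rw [integral_of_le hR0]
  have houter : (∫ r in Set.Ioc (0:ℝ) R, ∫ t in (0:ℝ)..R, f r t)
      ≤ ∫ r in Set.Ioc (0:ℝ) R, (Real.sqrt R / (2*τ)) * r ^ (-(1/2) : ℝ) := by
    apply integral_mono_of_nonneg
    · filter_upwards [ae_restrict_mem measurableSet_Ioc] with r hr
      exact intervalIntegral.integral_nonneg hR0 (fun t _ => hfnn r hr.1.le t)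
    · have := (intervalIntegral.intervalIntegrable_rpow' (a := 0) (b := R)
        (r := -(1/2)) (by norm_num)).const_mul (Real.sqrt R / (2*τ))
      exact (intervalIntegrable_iff_integrableOn_Ioc_of_le hR0).mp this
    · filter_upwards [ae_restrict_mem measurableSet_Ioc] with r hr
      exact inner_bound r hr.1
  refine houter.trans ?_
  rw [MeasureTheory.integral_const_mul, half_int R hR0]
  rw [show Real.sqrt R / (2*τ) * (2*Real.sqrt R) = (Real.sqrt R * Real.sqrt R)/τ by ring,
    Real.mul_self_sqrt hR0, one_mul]
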